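/- arXiv:2403.15686 — 3 statements merged into one kernel-verified Lean document; each statement's English description precedes it below -/
import Mathlib

section
/- Let E be a finite-dimensional real vector space and P = ⋂_{i∈I} {x ∈ E : fᵢ(x) ≤ cᵢ} a nonempty polyhedron, where I is a finite index set, the fᵢ are linear functionals, and cᵢ ∈ ℝ. Let J = {i ∈ I : there exists x ∈ P with fᵢ(x) < cᵢ}. Then the intrinsic interior (relative interior) of P is {x ∈ P : fᵢ(x) < cᵢ for all i ∈ J}, and consequently the intrinsic frontier (relative boundary) of P is ⋃_{i∈J} {x ∈ P : fᵢ(x) = cᵢ}, i.e. the union of the proper exposed faces of P cut out by the non-redundant defining inequalities. -/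
/-- The relative interior of a nonempty polyhedron is the set of points of the polyhedron
satisfying all non-redundant defining inequalities strictly, and consequently the relative
boundary is the union of the proper exposed faces cut out by these inequalities. -/
theorem intrinsicInterior_intrinsicFrontier_polyhedron
    {E : Type*} [NormedAddCommGroup E] [NormedSpace ℝ E] [FiniteDimensional ℝ E]
    {I : Type*} [Fintype I] (f : I → (E →ₗ[ℝ] ℝ)) (c : I → ℝ)
    (P : Set E) (hP : P = ⋂ i, {x : E | f i x ≤ c i}) (hne : P.Nonempty)
    (J : Set I) (hJ : J = {i : I | ∃ x ∈ P, f i x < c i}) :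
    intrinsicInterior ℝ P = {x ∈ P | ∀ i ∈ J, f i x < c i} ∧
      intrinsicFrontier ℝ P = ⋃ i ∈ J, {x ∈ P | f i x = c i} := by
  classical
  have hmemP : ∀ x, x ∈ P ↔ ∀ i, f i x ≤ c i := by
    intro x; rw [hP]; simp
  -- points of P not in J satisfy equality
  have heq : ∀ i ∉ J, ∀ x ∈ P, f i x = c i := by
    intro i hi x hx
    have h1 : f i x ≤ c i := (hmemP x).1 hx i
    have h2 : ¬ f i x < c i := by
      intro h; exact hi (hJ ▸ ⟨x, hx, h⟩)
    linarith
  set S := affineSpan ℝ P with hS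
  -- equality extends to the affine span
  have heqS : ∀ i ∉ J, ∀ y ∈ S, f i y = c i := by
    intro i hi y hy
    have hle : S ≤ AffineSubspace.comap (f i).toAffineMap
        (AffineSubspace.mk' (c i) (⊥ : Submodule ℝ ℝ)) := by
      rw [hS, affineSpan_le]
      intro x hx
      simp only [Set.mem_setOf_eq, SetLike.mem_coe, AffineSubspace.mem_comap,
        AffineSubspace.mem_mk']
      simp [heq i hi x hx]
    have := hle hy
    simp only [SetLike.mem_coe, AffineSubspace.mem_comap, AffineSubspace.mem_mk',
      Submodule.mem_bot, vsub_eq_sub, sub_eq_zero] at this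
    exact this
  have hPclosed : IsClosed P := by
    rw [hP]
    exact isClosed_iInter fun i =>
      IsClosed.preimage (f i).continuous_of_finiteDimensional isClosed_Iic
  -- main claim: intrinsic interior
  have hint : intrinsicInterior ℝ P = {x ∈ P | ∀ i ∈ J, f i x < c i} := by
    apply Set.Subset.antisymm
    · -- ⊆
      rintro x hx
      obtain ⟨y, hy, rfl⟩ := hx
      have hyP : (y : E) ∈ P := Set.mem_preimage.1 (interior_subset hy)
      refine ⟨hyP, fun i hiJ => ?_⟩
      by_contra hlt
      have hyeq : f i y = c i := le_antisymm ((hmemP _).1 hyP i) (not_lt.1 hlt)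
      rw [hJ] at hiJ
      obtain ⟨z, hzP, hzlt⟩ := hiJ
      have hzS : z ∈ S := subset_affineSpan ℝ P hzP
      have hmem : ∀ t : ℝ, t • ((y : E) - z) + z ∈ S := by
        intro t
        have h := AffineMap.lineMap_mem (Q := S) t hzS y.2
        rw [AffineMap.lineMap_apply_module] at h
        have e : t • ((y : E) - z) + z = (1 - t) • z + t • (y : E) := by module
        rw [e]; exact h
      set g : ℝ → S := fun t => ⟨t • ((y : E) - z) + z, hmem t⟩ with hg
      have hgcont : Continuous g := by
        apply Continuous.subtype_mk
        exact (continuous_id.smul continuous_const).add continuous_const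
      have hg1 : g 1 = y := by
        ext; simp [hg]
      have : g ⁻¹' interior ((↑) ⁻¹' P : Set S) ∈ nhds (1 : ℝ) := by
        apply (hgcont.isOpen_preimage _ isOpen_interior).mem_nhds
        rw [Set.mem_preimage, hg1]; exact hy
      obtain ⟨ε, hε, hball⟩ := Metric.mem_nhds_iff.1 this
      set t : ℝ := 1 + ε / 2 with ht
      have htmem : t ∈ Metric.ball (1 : ℝ) ε := by
        simp only [Metric.mem_ball, Real.dist_eq, ht]
        rw [abs_of_pos (by linarith)]
        linarith
      have hgmem : g t ∈ interior ((↑) ⁻¹' P : Set S) := hball htmem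
      have hgmem2 : g t ∈ ((↑) ⁻¹' P : Set S) := interior_subset hgmem
      have hgtP : t • ((y : E) - z) + z ∈ P := hgmem2
      have hle : f i (t • ((y : E) - z) + z) ≤ c i := (hmemP _).1 hgtP i
      simp only [map_add, map_smul, map_sub, smul_eq_mul] at hle
      rw [hyeq] at hle
      have ht1 : (1 : ℝ) < t := by rw [ht]; linarith
      nlinarith [mul_pos (sub_pos.2 ht1) (sub_pos.2 hzlt)]
    · -- ⊇
      rintro x ⟨hxP, hxlt⟩
      have hxS : x ∈ S := subset_affineSpan ℝ P hxP
      rw [intrinsicInterior]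
      refine ⟨⟨x, hxS⟩, ?_, rfl⟩
      set U : Set S := ⋂ i ∈ J, {y : S | f i ↑y < c i} with hU
      have hUopen : IsOpen U := by
        apply Set.Finite.isOpen_biInter (Set.toFinite J)
        intro i _
        exact IsOpen.preimage
          (((f i).continuous_of_finiteDimensional).comp continuous_subtype_val) isOpen_Iio
      have hUsub : U ⊆ ((↑) ⁻¹' P : Set S) := by
        intro y hy
        rw [Set.mem_preimage, hmemP]
        intro i
        by_cases hiJ : i ∈ J
        · exact le_of_lt (by simpa using Set.mem_iInter₂.1 hy i hiJ)
        · exact le_of_eq (heqS i hiJ y y.2)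
      have hxU : (⟨x, hxS⟩ : S) ∈ U := Set.mem_iInter₂.2 fun i hi => hxlt i hi
      exact interior_mono hUsub (hUopen.subset_interior_iff.2 le_rfl hxU)
  refine ⟨hint, ?_⟩
  -- frontier part
  rw [← closure_diff_intrinsicInterior, hPclosed.closure_eq, hint]
  ext x
  simp only [Set.mem_diff, Set.mem_setOf_eq, Set.mem_iUnion, not_and, not_forall]
  constructor
  · rintro ⟨hxP, h⟩
    obtain ⟨i, hiJ, hnlt⟩ := h hxP
    exact ⟨i, hiJ, hxP, le_antisymm ((hmemP x).1 hxP i) (not_lt.1 hnlt)⟩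
  · rintro ⟨i, hiJ, hxP, hxeq⟩
    exact ⟨hxP, fun _ => ⟨i, hiJ, by rw [hxeq]; exact lt_irrefl _⟩⟩
end

section
/- Let E and F be finite-dimensional real vector spaces, P ⊆ E a nonempty polyhedron that contains no affine line (i.e. there is no x ∈ E and v ≠ 0 with x + tv ∈ P for all t ∈ ℝ), and g : E → F an affine map with linear part L. Suppose there exists a nonzero vector v in the direction space of the affine span of P with L(v) = 0. Then g(P) = g(intrinsicFrontier(P)); i.e. every value of g on P is already attained on the relative boundary of P. (This is the lemma by which the paper replaces a face W of the skeleton with a smaller face while preserving the image of α: since the skeleton of a strictly semistable pair contains no lines, α(W) = α(∂W) whenever dα has nontrivial kernel along W.) -/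
/-- If a nonempty line-free polyhedron `P` admits a nonzero direction vector `v` of its
affine span that is killed by the linear part of an affine map `g`, then every value of `g`
on `P` is already attained on the relative boundary of `P`. -/
theorem image_eq_image_intrinsicFrontier
    {E F : Type*} [NormedAddCommGroup E] [NormedSpace ℝ E] [FiniteDimensional ℝ E]
    [NormedAddCommGroup F] [NormedSpace ℝ F] [FiniteDimensional ℝ F]
    {m : ℕ} (f : Fin m → (E →ₗ[ℝ] ℝ)) (c : Fin m → ℝ)
    (P : Set E) (hP : P = ⋂ i, {x : E | f i x ≤ c i}) (hne : P.Nonempty)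
    (hlineFree : ¬ ∃ (x v : E), v ≠ 0 ∧ ∀ t : ℝ, x + t • v ∈ P)
    (g : E →ᵃ[ℝ] F)
    (hker : ∃ v : E, v ≠ 0 ∧ v ∈ (affineSpan ℝ P).direction ∧ g.linear v = 0) :
    g '' P = g '' intrinsicFrontier ℝ P := by
  obtain ⟨v, hv0, hvdir, hvker⟩ := hker
  have hPclosed : IsClosed P := by
    rw [hP]
    exact isClosed_iInter fun i =>
      IsClosed.preimage (f i).continuous_of_finiteDimensional isClosed_Iic
  apply Set.Subset.antisymm
  · rintro _ ⟨x, hx, rfl⟩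
    -- the set of parameters along the line through x in direction v
    set S : Set ℝ := {t : ℝ | x + t • v ∈ P} with hS
    have hScl : IsClosed S := by
      have : Continuous fun t : ℝ => x + t • v := by continuity
      exact hPclosed.preimage this
    have h0S : (0 : ℝ) ∈ S := by simp only [hS, Set.mem_setOf_eq, zero_smul, add_zero]; exact hx
    have hSne : S ≠ Set.univ := by
      intro h
      exact hlineFree ⟨x, v, hv0, fun t => by
        have : t ∈ S := h ▸ Set.mem_univ t
        exact this⟩
    -- S closed, nonempty, ≠ univ : there is a frontier point inside S
    have hfr : ∃ t, t ∈ S ∧ t ∉ interior S := by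
      by_contra h
      push_neg at h
      have : S = interior S := Set.Subset.antisymm (fun t ht => h t ht) interior_subset
      have hopen : IsOpen S := this ▸ isOpen_interior
      have := (isClopen_iff.1 ⟨hScl, hopen⟩).resolve_left (by
        intro h'; exact (h' ▸ h0S : (0:ℝ) ∈ (∅ : Set ℝ)))
      exact hSne this
    obtain ⟨t, htS, htint⟩ := hfr
    set z : E := x + t • v with hz
    have hzP : z ∈ P := htS
    -- z is in the affine span, and points along the line stay in the span
    have hxspan : x ∈ affineSpan ℝ P := subset_affineSpan ℝ P hx
    have hline : ∀ s : ℝ, x + s • v ∈ affineSpan ℝ P := fun s => by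
      have : (s • v) +ᵥ x ∈ affineSpan ℝ P :=
        AffineSubspace.vadd_mem_of_mem_direction
          (Submodule.smul_mem _ s hvdir) hxspan
      simpa [add_comm] using this
    -- z is not in the intrinsic interior
    have hznotint : z ∉ intrinsicInterior ℝ P := by
      intro hzint
      rw [mem_intrinsicInterior] at hzint
      obtain ⟨w, hw, hwz⟩ := hzint
      -- the map ℝ → affineSpan ℝ P, s ↦ x + s • v
      let φ : ℝ → affineSpan ℝ P := fun s => ⟨x + s • v, hline s⟩
      have hφcont : Continuous φ := by
        apply Continuous.subtype_mk
        continuity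
      have hφt : φ t = w := Subtype.ext (by simpa [φ] using hwz.symm)
      have hopen : IsOpen (φ ⁻¹' interior ((↑) ⁻¹' P : Set (affineSpan ℝ P))) :=
        isOpen_interior.preimage hφcont
      have hmem : t ∈ φ ⁻¹' interior ((↑) ⁻¹' P : Set (affineSpan ℝ P)) := by
        simp only [Set.mem_preimage, hφt]; exact hw
      have hsub : φ ⁻¹' interior ((↑) ⁻¹' P : Set (affineSpan ℝ P)) ⊆ S := by
        intro s hs
        have : φ s ∈ ((↑) ⁻¹' P : Set (affineSpan ℝ P)) := interior_subset hs
        exact this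
      exact htint (mem_interior.2 ⟨_, hsub, hopen, hmem⟩)
    have hzfr : z ∈ intrinsicFrontier ℝ P := by
      have : z ∈ intrinsicClosure ℝ P := subset_intrinsicClosure hzP
      rw [← intrinsicClosure_diff_intrinsicInterior]
      exact ⟨this, hznotint⟩
    refine ⟨z, hzfr, ?_⟩
    have : g z = g.linear (t • v) +ᵥ g x := by
      rw [hz, add_comm x (t • v), ← vadd_eq_add, g.map_vadd]
    simp [this, hvker]
  · exact Set.image_mono (f := g) (intrinsicFrontier_subset hPclosed)
end

section
/- Let E be a finite-dimensional real vector space, C ⊆ E a nonempty convex set, and C₁, …, C_m ⊆ E finitely many convex sets with C ⊆ C₁ ∪ ⋯ ∪ C_m. Then there exists an index i such that affineSpan(C) ⊆ affineSpan(Cᵢ); in particular, some Cᵢ has dimension at least the dimension of C. (Equivalently: a convex set of dimension k cannot be covered by finitely many convex sets all of dimension less than k; this is used in the paper's inductive argument producing a face of the skeleton whose image under α has full dimension.) -/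
open Module

lemma convex_cover_affineSubspaces
    {E : Type*} [AddCommGroup E] [Module ℝ E] {ι : Type*}
    (s : Finset ι) (A : ι → AffineSubspace ℝ E)
    (C : Set E) (hC : Convex ℝ C) (hne : C.Nonempty)
    (hcov : C ⊆ ⋃ i ∈ s, (A i : Set E)) : ∃ i ∈ s, C ⊆ A i := by
  classical
  induction s using Finset.induction with
  | empty =>
    obtain ⟨x, hx⟩ := hne
    simpa using hcov hx
  | @insert a s ha IH =>
    by_cases hCa : C ⊆ A a
    · exact ⟨a, Finset.mem_insert_self a s, hCa⟩
    · obtain ⟨x, hxC, hxA⟩ := Set.not_subset.1 hCa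
      have hsub : C ⊆ ⋃ i ∈ s, (A i : Set E) := by
        intro y hyC
        simp only [Set.mem_iUnion, SetLike.mem_coe, exists_prop]
        by_cases hxy : y = x
        · subst hxy
          have := hcov hyC
          simp only [Set.mem_iUnion, SetLike.mem_coe, exists_prop,
            Finset.mem_insert] at this
          obtain ⟨i, hi | hi, hmem⟩ := this
          · exact absurd (hi ▸ hmem) hxA
          · exact ⟨i, hi, hmem⟩
        · -- segment argument
          set f : ℝ →ᵃ[ℝ] E := AffineMap.lineMap x y with hf
          have hmemC : ∀ t : Set.Icc (0:ℝ) 1, f t ∈ C := by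
            intro ⟨t, ht0, ht1⟩
            have := hC.segment_subset hxC hyC
            rw [segment_eq_image_lineMap] at this
            exact this ⟨t, ⟨ht0, ht1⟩, rfl⟩
          have hchoice : ∀ t : Set.Icc (0:ℝ) 1,
              ∃ i : {i // i ∈ insert a s}, f t ∈ A i := by
            intro t
            have := hcov (hmemC t)
            simp only [Set.mem_iUnion, SetLike.mem_coe, exists_prop] at this
            obtain ⟨i, hi, hm⟩ := this
            exact ⟨⟨i, hi⟩, hm⟩
          choose g hg using hchoice
          haveI : Infinite (Set.Icc (0:ℝ) 1) := Set.Icc.infinite (by norm_num)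
          obtain ⟨t₁, t₂, hne12, heq⟩ := Finite.exists_ne_map_eq_of_infinite g
          set i := g t₁ with hi
          have h1 : f t₁ ∈ A i := hg t₁
          have h2 : f t₂ ∈ A i := heq ▸ hg t₂
          have htne : (t₁ : ℝ) ≠ (t₂ : ℝ) := fun h => hne12 (Subtype.coe_injective h)
          have key : ∀ r : ℝ, f r ∈ A i := by
            intro r
            have hr : r = AffineMap.lineMap (t₁ : ℝ) (t₂ : ℝ)
                ((r - t₁) / (t₂ - t₁)) := by
              have hd : (t₂ : ℝ) - t₁ ≠ 0 := sub_ne_zero.2 htne.symm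
              rw [AffineMap.lineMap_apply]
              simp only [vsub_eq_sub, vadd_eq_add, smul_eq_mul]
              field_simp
              ring
            rw [hr, AffineMap.apply_lineMap]
            exact AffineMap.lineMap_mem _ h1 h2
          have hxAi : x ∈ A i := by
            have := key 0
            rwa [show f 0 = x from AffineMap.lineMap_apply_zero x y] at this
          have hyAi : y ∈ A i := by
            have := key 1
            rwa [show f 1 = y from AffineMap.lineMap_apply_one x y] at this
          have his : (i : ι) ∈ s := by
            rcases Finset.mem_insert.1 i.2 with h | h
            · exact absurd (h ▸ hxAi) hxA
            · exact h
          exact ⟨i, his, hyAi⟩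
      obtain ⟨i, hi, h⟩ := IH hsub
      exact ⟨i, Finset.mem_insert_of_mem hi, h⟩

/-- A nonempty convex set covered by finitely many convex sets has its affine span contained
in the affine span of one of them; in particular, one of the covering sets has dimension at
least the dimension of the covered set. -/
theorem convex_cover_affineSpan
    {E : Type*} [AddCommGroup E] [Module ℝ E] [FiniteDimensional ℝ E]
    (C : Set E) (hC : Convex ℝ C) (hne : C.Nonempty)
    {m : ℕ} (Cs : Fin m → Set E) (hCs : ∀ i, Convex ℝ (Cs i))
    (hcover : C ⊆ ⋃ i, Cs i) :
    ∃ i, affineSpan ℝ C ≤ affineSpan ℝ (Cs i) ∧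
      finrank ℝ (affineSpan ℝ C).direction ≤ finrank ℝ (affineSpan ℝ (Cs i)).direction := by
  have hcov' : C ⊆ ⋃ i ∈ (Finset.univ : Finset (Fin m)),
      ((affineSpan ℝ (Cs i) : AffineSubspace ℝ E) : Set E) := by
    intro x hx
    obtain ⟨i, hi⟩ := Set.mem_iUnion.1 (hcover hx)
    exact Set.mem_iUnion₂.2 ⟨i, Finset.mem_univ i, subset_affineSpan ℝ _ hi⟩
  obtain ⟨i, -, hsub⟩ := convex_cover_affineSubspaces Finset.univ
    (fun i => affineSpan ℝ (Cs i)) C hC hne hcov'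
  have hle : affineSpan ℝ C ≤ affineSpan ℝ (Cs i) := affineSpan_le.2 hsub
  exact ⟨i, hle, Submodule.finrank_mono (AffineSubspace.direction_le hle)⟩
end
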